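/- arXiv:1603.03219 — 2 statements merged into one kernel-verified Lean document; each statement's English description precedes it below -/
import Mathlib

section
/- Let g ≥ 2 and define σ : ℂ → ℝ by σ(x) = Σ_{i=0}^{g−1} |x|^(2i). Then (∂²σ/∂x∂\bar x)·σ − (∂σ/∂x)·(∂σ/∂\bar x) > 0 at every point x ∈ ℂ. -/
open Finset

/-- Directional derivative along the real axis. -/
noncomputable def dre (f : ℂ → ℂ) (z : ℂ) : ℂ := deriv (fun t : ℝ => f (z + (t : ℂ))) 0

/-- Directional derivative along the imaginary axis. -/
noncomputable def dim (f : ℂ → ℂ) (z : ℂ) : ℂ :=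
  deriv (fun t : ℝ => f (z + (t : ℂ) * Complex.I)) 0

/-- The Wirtinger derivative ∂/∂z = (1/2)(∂/∂u − i ∂/∂v). -/
noncomputable def wdz (f : ℂ → ℂ) (z : ℂ) : ℂ := (dre f z - Complex.I * dim f z) / 2

/-- The Wirtinger derivative ∂/∂z̄ = (1/2)(∂/∂u + i ∂/∂v). -/
noncomputable def wdzbar (f : ℂ → ℂ) (z : ℂ) : ℂ := (dre f z + Complex.I * dim f z) / 2

section Aux
open Complex
variable (s : Finset ℕ) (c : ℕ → ℂ) (p q : ℕ → ℕ)

lemma dre_M (z : ℂ) :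
    dre (fun w => ∑ i ∈ s, c i * w ^ p i * (starRingEnd ℂ) w ^ q i) z =
      ∑ i ∈ s, c i * ((p i : ℂ) * z ^ (p i - 1) * (starRingEnd ℂ) z ^ q i
        + (q i : ℂ) * z ^ p i * (starRingEnd ℂ) z ^ (q i - 1)) := by
  have hE : HasDerivAt (fun w : ℂ => ∑ i ∈ s, c i * ((z + w) ^ p i * ((starRingEnd ℂ) z + w) ^ q i))
      (∑ i ∈ s, c i * ((p i : ℂ) * z ^ (p i - 1) * (starRingEnd ℂ) z ^ q i
        + (q i : ℂ) * z ^ p i * (starRingEnd ℂ) z ^ (q i - 1))) 0 := by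
    apply HasDerivAt.fun_sum
    intro i _
    have h1 : HasDerivAt (fun w : ℂ => (z + w) ^ p i) ((p i : ℂ) * z ^ (p i - 1)) 0 := by
      simpa using ((hasDerivAt_id (0:ℂ)).const_add z).fun_pow (p i)
    have h2 : HasDerivAt (fun w : ℂ => ((starRingEnd ℂ) z + w) ^ q i)
        ((q i : ℂ) * (starRingEnd ℂ) z ^ (q i - 1)) 0 := by
      simpa using ((hasDerivAt_id (0:ℂ)).const_add ((starRingEnd ℂ) z)).fun_pow (q i)
    exact ((h1.mul h2).const_mul (c i)).congr_deriv
      (by simp only [add_zero, sub_zero, mul_one, zero_mul]; ring)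
  have hfun : (fun t : ℝ => ∑ i ∈ s, c i * (z + (t:ℂ)) ^ p i * (starRingEnd ℂ) (z + (t:ℂ)) ^ q i)
      = fun t : ℝ => ∑ i ∈ s, c i * ((z + (t:ℂ)) ^ p i * ((starRingEnd ℂ) z + (t:ℂ)) ^ q i) := by
    funext t
    simp [map_add, Complex.conj_ofReal, mul_assoc]
  rw [dre, hfun]
  exact hE.comp_ofReal.deriv

lemma dim_M (z : ℂ) :
    dim (fun w => ∑ i ∈ s, c i * w ^ p i * (starRingEnd ℂ) w ^ q i) z =
      ∑ i ∈ s, c i * Complex.I * ((p i : ℂ) * z ^ (p i - 1) * (starRingEnd ℂ) z ^ q i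
        - (q i : ℂ) * z ^ p i * (starRingEnd ℂ) z ^ (q i - 1)) := by
  have hE : HasDerivAt (fun w : ℂ => ∑ i ∈ s,
        c i * ((z + w * Complex.I) ^ p i * ((starRingEnd ℂ) z - w * Complex.I) ^ q i))
      (∑ i ∈ s, c i * Complex.I * ((p i : ℂ) * z ^ (p i - 1) * (starRingEnd ℂ) z ^ q i
        - (q i : ℂ) * z ^ p i * (starRingEnd ℂ) z ^ (q i - 1))) 0 := by
    apply HasDerivAt.fun_sum
    intro i _
    have h1 : HasDerivAt (fun w : ℂ => (z + w * Complex.I) ^ p i)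
        ((p i : ℂ) * z ^ (p i - 1) * Complex.I) 0 := by
      simpa using (((hasDerivAt_id (0:ℂ)).mul_const Complex.I).const_add z).fun_pow (p i)
    have h2 : HasDerivAt (fun w : ℂ => ((starRingEnd ℂ) z - w * Complex.I) ^ q i)
        ((q i : ℂ) * (starRingEnd ℂ) z ^ (q i - 1) * (-Complex.I)) 0 := by
      have : HasDerivAt (fun w : ℂ => (starRingEnd ℂ) z - w * Complex.I) (-Complex.I) 0 := by
        simpa using (((hasDerivAt_id (0:ℂ)).mul_const Complex.I)).const_sub ((starRingEnd ℂ) z)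
      simpa using this.fun_pow (q i)
    exact ((h1.mul h2).const_mul (c i)).congr_deriv
      (by simp only [add_zero, sub_zero, mul_one, zero_mul]; ring)
  have hfun : (fun t : ℝ => ∑ i ∈ s,
        c i * (z + (t:ℂ) * Complex.I) ^ p i * (starRingEnd ℂ) (z + (t:ℂ) * Complex.I) ^ q i)
      = fun t : ℝ => ∑ i ∈ s,
        c i * ((z + (t:ℂ) * Complex.I) ^ p i * ((starRingEnd ℂ) z - (t:ℂ) * Complex.I) ^ q i) := by
    funext t
    simp only [map_add, map_mul, Complex.conj_ofReal, Complex.conj_I, mul_assoc,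
      mul_neg, mul_one, sub_eq_add_neg, add_comm]
  rw [dim, hfun]
  exact hE.comp_ofReal.deriv

lemma wdz_M (z : ℂ) :
    wdz (fun w => ∑ i ∈ s, c i * w ^ p i * (starRingEnd ℂ) w ^ q i) z =
      ∑ i ∈ s, c i * (p i : ℂ) * z ^ (p i - 1) * (starRingEnd ℂ) z ^ q i := by
  rw [wdz, dre_M, dim_M, Finset.mul_sum, ← Finset.sum_sub_distrib, Finset.sum_div]
  refine Finset.sum_congr rfl fun i _ => ?_
  linear_combination (-(c i * ((p i : ℂ) * z ^ (p i - 1) * (starRingEnd ℂ) z ^ q i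
    - (q i : ℂ) * z ^ p i * (starRingEnd ℂ) z ^ (q i - 1)))/2) * Complex.I_mul_I

lemma wdzbar_M (z : ℂ) :
    wdzbar (fun w => ∑ i ∈ s, c i * w ^ p i * (starRingEnd ℂ) w ^ q i) z =
      ∑ i ∈ s, c i * (q i : ℂ) * z ^ p i * (starRingEnd ℂ) z ^ (q i - 1) := by
  rw [wdzbar, dre_M, dim_M, Finset.mul_sum, ← Finset.sum_add_distrib, Finset.sum_div]
  refine Finset.sum_congr rfl fun i _ => ?_
  linear_combination ((c i * ((p i : ℂ) * z ^ (p i - 1) * (starRingEnd ℂ) z ^ q i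
    - (q i : ℂ) * z ^ p i * (starRingEnd ℂ) z ^ (q i - 1)))/2) * Complex.I_mul_I

end Aux

open Complex in
theorem sigma_gram_det_pos (g : ℕ) (hg : 2 ≤ g) (x : ℂ) :
    let σ : ℂ → ℂ := fun w => ∑ i ∈ range g, (w * (starRingEnd ℂ) w) ^ i
    let Q : ℂ := wdz (wdzbar σ) x * σ x - wdz σ x * wdzbar σ x
    0 < Q.re ∧ Q.im = 0 := by
  intro σ Q
  obtain ⟨m, rfl⟩ : ∃ m, g = m + 2 := ⟨g - 2, by omega⟩
  set r : ℝ := Complex.normSq x with hrdef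
  have hr : 0 ≤ r := Complex.normSq_nonneg x
  have hxc : x * (starRingEnd ℂ) x = (r : ℂ) := Complex.mul_conj x
  have hpow : ∀ i : ℕ, x ^ i * (starRingEnd ℂ) x ^ i = ((r : ℂ)) ^ i := by
    intro i
    rw [← mul_pow, hxc]
  set A : ℝ := ∑ i ∈ range (m + 1), ((i : ℝ) + 1) ^ 2 * r ^ i with hAdef
  set B : ℝ := ∑ i ∈ range (m + 1), ((i : ℝ) + 1) * r ^ i with hBdef
  set T : ℝ := ∑ i ∈ range (m + 1), r ^ (i + 1) with hTdef
  have hσ : σ = fun w => ∑ i ∈ range (m + 2), (fun _ : ℕ => (1 : ℂ)) i * w ^ i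
      * (starRingEnd ℂ) w ^ i := by
    funext w
    simp [σ, mul_pow]
  have hσx : σ x = ((1 + T : ℝ) : ℂ) := by
    have h1 : σ x = ∑ i ∈ range (m + 2), x ^ i * (starRingEnd ℂ) x ^ i := by simp [hσ]
    rw [h1, Finset.sum_range_succ']
    simp only [hpow, pow_zero]
    rw [hTdef]
    push_cast
    ring
  have hbar : wdzbar σ = fun w => ∑ i ∈ range (m + 2),
      (fun i : ℕ => (i : ℂ)) i * w ^ i * (starRingEnd ℂ) w ^ (i - 1) := by
    funext z
    rw [hσ, wdzbar_M]
    simp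
  have hbarx : wdzbar σ x = x * (B : ℂ) := by
    have h1 : wdzbar σ x = ∑ i ∈ range (m + 2),
        (i : ℂ) * x ^ i * (starRingEnd ℂ) x ^ (i - 1) := by
      rw [hσ]
      simpa using wdzbar_M (range (m + 2)) (fun _ => (1 : ℂ)) (fun i => i) (fun i => i) x
    rw [h1, Finset.sum_range_succ']
    simp only [Nat.add_sub_cancel, Nat.cast_zero, zero_mul, pow_zero, mul_one, add_zero,
      Nat.cast_add, Nat.cast_one]
    have key : ∀ i ∈ range (m + 1), ((i : ℂ) + 1) * x ^ (i + 1) * (starRingEnd ℂ) x ^ i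
        = (((i : ℂ) + 1) * ((r : ℂ)) ^ i) * x := by
      intro i _
      have h2 : x ^ (i + 1) * (starRingEnd ℂ) x ^ i = x * ((r : ℂ)) ^ i := by
        rw [pow_succ', mul_assoc, hpow]
      calc ((i : ℂ) + 1) * x ^ (i + 1) * (starRingEnd ℂ) x ^ i
          = ((i : ℂ) + 1) * (x ^ (i + 1) * (starRingEnd ℂ) x ^ i) := by ring
        _ = ((i : ℂ) + 1) * (x * ((r : ℂ)) ^ i) := by rw [h2]
        _ = (((i : ℂ) + 1) * ((r : ℂ)) ^ i) * x := by ring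
    rw [Finset.sum_congr rfl key, ← Finset.sum_mul, hBdef]
    push_cast
    ring
  have hbarconj : wdz σ x = (starRingEnd ℂ) x * (B : ℂ) := by
    have h1 : wdz σ x = ∑ i ∈ range (m + 2),
        (i : ℂ) * x ^ (i - 1) * (starRingEnd ℂ) x ^ i := by
      rw [hσ]
      simpa using wdz_M (range (m + 2)) (fun _ => (1 : ℂ)) (fun i => i) (fun i => i) x
    rw [h1, Finset.sum_range_succ']
    simp only [Nat.add_sub_cancel, Nat.cast_zero, zero_mul, pow_zero, add_zero,
      Nat.cast_add, Nat.cast_one]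
    have key : ∀ i ∈ range (m + 1), ((i : ℂ) + 1) * x ^ i * (starRingEnd ℂ) x ^ (i + 1)
        = (((i : ℂ) + 1) * ((r : ℂ)) ^ i) * (starRingEnd ℂ) x := by
      intro i _
      have h2 : x ^ i * (starRingEnd ℂ) x ^ (i + 1) = ((r : ℂ)) ^ i * (starRingEnd ℂ) x := by
        calc x ^ i * (starRingEnd ℂ) x ^ (i + 1)
            = (x ^ i * (starRingEnd ℂ) x ^ i) * (starRingEnd ℂ) x := by rw [pow_succ]; ring
          _ = ((r : ℂ)) ^ i * (starRingEnd ℂ) x := by rw [hpow]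
      calc ((i : ℂ) + 1) * x ^ i * (starRingEnd ℂ) x ^ (i + 1)
          = ((i : ℂ) + 1) * (x ^ i * (starRingEnd ℂ) x ^ (i + 1)) := by ring
        _ = ((i : ℂ) + 1) * (((r : ℂ)) ^ i * (starRingEnd ℂ) x) := by rw [h2]
        _ = (((i : ℂ) + 1) * ((r : ℂ)) ^ i) * (starRingEnd ℂ) x := by ring
    rw [Finset.sum_congr rfl key, ← Finset.sum_mul, hBdef]
    push_cast
    ring
  have hmix : wdz (wdzbar σ) x = (A : ℂ) := by
    have h1 : wdz (wdzbar σ) x = ∑ i ∈ range (m + 2),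
        (i : ℂ) * (i : ℂ) * x ^ (i - 1) * (starRingEnd ℂ) x ^ (i - 1) := by
      rw [hbar]
      simpa [mul_assoc] using wdz_M (range (m + 2)) (fun i => (i : ℂ)) (fun i => i)
        (fun i => i - 1) x
    rw [h1, Finset.sum_range_succ']
    simp only [Nat.add_sub_cancel, Nat.cast_zero, zero_mul, add_zero,
      Nat.cast_add, Nat.cast_one]
    have key : ∀ i ∈ range (m + 1),
        ((i : ℂ) + 1) * ((i : ℂ) + 1) * x ^ i * (starRingEnd ℂ) x ^ i
        = ((i : ℂ) + 1) ^ 2 * ((r : ℂ)) ^ i := by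
      intro i _
      rw [mul_assoc, hpow]
      ring
    rw [Finset.sum_congr rfl key, hAdef]
    push_cast
    ring
  have hQ : Q = ((A * (1 + T) - r * B ^ 2 : ℝ) : ℂ) := by
    show wdz (wdzbar σ) x * σ x - wdz σ x * wdzbar σ x = _
    rw [hmix, hσx, hbarconj, hbarx]
    have h3 : (starRingEnd ℂ) x * (B : ℂ) * (x * (B : ℂ)) = (r : ℂ) * (B : ℂ) ^ 2 := by
      rw [show (starRingEnd ℂ) x * (B : ℂ) * (x * (B : ℂ))
        = x * (starRingEnd ℂ) x * ((B : ℂ) * (B : ℂ)) from by ring, hxc]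
      ring
    rw [h3]
    push_cast
    ring
  have hA1 : (1 : ℝ) ≤ A := by
    have h0 : ((0 : ℕ) : ℝ) * 0 + 1 ≤ A := by
      rw [hAdef]
      have := Finset.single_le_sum (f := fun i : ℕ => ((i : ℝ) + 1) ^ 2 * r ^ i)
        (fun i _ => by positivity) (Finset.mem_range.mpr (Nat.succ_pos m))
      simpa using this
    simpa using h0
  have hCS : r * B ^ 2 ≤ A * T := by
    have key := Finset.sum_mul_sq_le_sq_mul_sq (range (m + 1))
      (fun i => ((i : ℝ) + 1) * Real.sqrt r ^ i) (fun i => Real.sqrt r ^ (i + 1))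
    have hs2 : Real.sqrt r ^ 2 = r := Real.sq_sqrt hr
    have e1 : ∑ i ∈ range (m + 1), (((i : ℝ) + 1) * Real.sqrt r ^ i) * Real.sqrt r ^ (i + 1)
        = Real.sqrt r * B := by
      rw [hBdef, Finset.mul_sum]
      refine Finset.sum_congr rfl fun i _ => ?_
      have h4 : Real.sqrt r ^ i * Real.sqrt r ^ (i + 1) = Real.sqrt r * r ^ i := by
        rw [← pow_add, show i + (i + 1) = 2 * i + 1 from by ring, pow_succ, pow_mul, hs2]
        ring
      calc (((i : ℝ) + 1) * Real.sqrt r ^ i) * Real.sqrt r ^ (i + 1)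
          = ((i : ℝ) + 1) * (Real.sqrt r ^ i * Real.sqrt r ^ (i + 1)) := by ring
        _ = ((i : ℝ) + 1) * (Real.sqrt r * r ^ i) := by rw [h4]
        _ = Real.sqrt r * (((i : ℝ) + 1) * r ^ i) := by ring
    have e2 : ∑ i ∈ range (m + 1), (((i : ℝ) + 1) * Real.sqrt r ^ i) ^ 2 = A := by
      rw [hAdef]
      refine Finset.sum_congr rfl fun i _ => ?_
      rw [mul_pow, ← pow_mul, show i * 2 = 2 * i from by ring, pow_mul, hs2]
    have e3 : ∑ i ∈ range (m + 1), (Real.sqrt r ^ (i + 1)) ^ 2 = T := by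
      rw [hTdef]
      refine Finset.sum_congr rfl fun i _ => ?_
      rw [← pow_mul, show (i + 1) * 2 = 2 * (i + 1) from by ring, pow_mul, hs2]
    rw [e1, e2, e3] at key
    calc r * B ^ 2 = (Real.sqrt r * B) ^ 2 := by rw [mul_pow, hs2]
      _ ≤ A * T := key
  constructor
  · rw [hQ, Complex.ofReal_re]
    nlinarith [hA1, hCS]
  · rw [hQ, Complex.ofReal_im]
end

section
/- Let a, d ∈ ℝ, b ∈ ℂ with a > 0 and ad − |b|² > 0, let U ⊆ ℂ be open, and let h : U → ℂ be holomorphic and nonvanishing on U. Define ρ : U → ℝ by ρ(z) = (a + b\bar z + \bar b z + d|z|²)/|h(z)| and u : U → ℝ by u(z) = log(2(ad−|b|²)·|h(z)|/(a + b\bar z + \bar b z + d|z|²)³). Then at every z ∈ U, (4/ρ(z))·∂²u/∂z∂\bar z (z) + 6·e^{u(z)} = 0. -/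
open Complex Filter

/-- The flat Laplacian Δ = ∂²/∂u² + ∂²/∂v² = 4·∂²/∂z∂z̄ of a function on ℂ ≅ ℝ². -/
noncomputable def laplacian (f : ℂ → ℝ) (z : ℂ) : ℝ :=
  iteratedDeriv 2 (fun t : ℝ => f (z + (t : ℂ))) 0 +
    iteratedDeriv 2 (fun t : ℝ => f (z + (t : ℂ) * Complex.I)) 0

lemma line_second_deriv (W : Set ℂ) (hW : IsOpen W) (g : ℂ → ℂ)
    (hg : DifferentiableOn ℂ g W) (z₀ : ℂ) (hz : z₀ ∈ W) (e : ℂ)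
    (A B D c : ℝ) (hpos : ∀ t : ℝ, 0 < A + B * t + D * t ^ 2)
    (F : ℝ → ℝ)
    (hF : ∀ t : ℝ, z₀ + (t : ℂ) * e ∈ W →
      F t = c + (g (z₀ + (t : ℂ) * e)).re - 3 * Real.log (A + B * t + D * t ^ 2)) :
    iteratedDeriv 2 F 0 =
      (e ^ 2 * deriv (deriv g) z₀).re - 3 * ((2 * D * A - B ^ 2) / A ^ 2) := by
  have hA : 0 < A := by simpa using hpos 0
  have hq0 : ∀ t : ℝ, A + B * t + D * t ^ 2 ≠ 0 := fun t => (hpos t).ne'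
  have hline : ∀ t : ℝ, HasDerivAt (fun s : ℝ => z₀ + (s : ℂ) * e) e t := by
    intro t
    have h1 : HasDerivAt (fun s : ℝ => (s : ℂ)) 1 t := Complex.ofRealCLM.hasDerivAt
    simpa using (h1.mul_const e).const_add z₀
  have hcomp : ∀ (ψ : ℂ → ℂ) (t : ℝ), DifferentiableAt ℂ ψ (z₀ + (t : ℂ) * e) →
      HasDerivAt (fun s : ℝ => ψ (z₀ + (s : ℂ) * e)) (e * deriv ψ (z₀ + (t : ℂ) * e)) t := by
    intro ψ t hψ
    have h1 := (hψ.hasDerivAt.hasFDerivAt.restrictScalars ℝ).comp_hasDerivAt t (hline t)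
    simpa [Function.comp_def, mul_comm] using h1
  have hre : ∀ (ψ : ℝ → ℂ) (c' : ℂ) (t : ℝ), HasDerivAt ψ c' t →
      HasDerivAt (fun s => (ψ s).re) c'.re t := by
    intro ψ c' t hψ
    simpa [Function.comp_def] using (Complex.reCLM.hasFDerivAt.comp_hasDerivAt t hψ)
  have hquad : ∀ t : ℝ, HasDerivAt (fun s : ℝ => A + B * s + D * s ^ 2) (B + D * (2 * t)) t := by
    intro t
    have := (((hasDerivAt_id t).const_mul B).const_add A).add ((hasDerivAt_pow 2 t).const_mul D)
    simpa [Pi.add_def] using this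
  have hmem : ∀ᶠ (t : ℝ) in nhds 0, z₀ + (t : ℂ) * e ∈ W := by
    have hc : ContinuousAt (fun t : ℝ => z₀ + (t : ℂ) * e) 0 := by fun_prop
    have := hc.eventually_mem (s := W) (by simpa using hW.mem_nhds hz)
    exact this
  have han : AnalyticOnNhd ℂ g W := hg.analyticOnNhd hW
  -- derivative of F near 0
  have hG' : ∀ t : ℝ, z₀ + (t : ℂ) * e ∈ W → HasDerivAt
      (fun s : ℝ => c + (g (z₀ + (s : ℂ) * e)).re - 3 * Real.log (A + B * s + D * s ^ 2))
      ((e * deriv g (z₀ + (t : ℂ) * e)).re - 3 * ((B + D * (2 * t)) / (A + B * t + D * t ^ 2))) t := by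
    intro t ht
    have h1 : HasDerivAt (fun s : ℝ => (g (z₀ + (s : ℂ) * e)).re)
        (e * deriv g (z₀ + (t : ℂ) * e)).re t :=
      hre _ _ t (hcomp g t ((han _ ht).differentiableAt))
    have h2 := ((hquad t).log (hq0 t)).const_mul 3
    simpa [mul_div_assoc, Pi.sub_def] using (h1.const_add c).sub h2
  have hFeq : F =ᶠ[nhds 0]
      fun s : ℝ => c + (g (z₀ + (s : ℂ) * e)).re - 3 * Real.log (A + B * s + D * s ^ 2) :=
    hmem.mono fun t ht => hF t ht
  have hderiv_ev : deriv F =ᶠ[nhds 0] fun t =>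
      (e * deriv g (z₀ + (t : ℂ) * e)).re - 3 * ((B + D * (2 * t)) / (A + B * t + D * t ^ 2)) := by
    have h1 := hFeq.deriv
    filter_upwards [h1, hmem] with t h1t hmt
    rw [h1t, (hG' t hmt).deriv]
  -- second derivative at 0
  have hd2 : HasDerivAt (fun t : ℝ =>
      (e * deriv g (z₀ + (t : ℂ) * e)).re - 3 * ((B + D * (2 * t)) / (A + B * t + D * t ^ 2)))
      ((e ^ 2 * deriv (deriv g) z₀).re - 3 * ((2 * D * A - B ^ 2) / A ^ 2)) 0 := by
    have hdg : DifferentiableAt ℂ (deriv g) (z₀ + ((0 : ℝ) : ℂ) * e) := by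
      simpa using ((han.deriv) _ hz).differentiableAt
    have h1 : HasDerivAt (fun t : ℝ => (e * deriv g (z₀ + (t : ℂ) * e)).re)
        (e ^ 2 * deriv (deriv g) z₀).re 0 := by
      have h0 := hre _ _ 0 (((hcomp (deriv g) 0 hdg)).const_mul e)
      rw [show z₀ + ((0 : ℝ) : ℂ) * e = z₀ from by simp] at h0
      convert h0 using 2
      ring
    have hnum : HasDerivAt (fun t : ℝ => B + D * (2 * t)) (D * 2) 0 := by
      simpa using ((hasDerivAt_id (0:ℝ)).const_mul 2 |>.const_mul D).const_add B
    have h2 : HasDerivAt (fun t : ℝ => (B + D * (2 * t)) / (A + B * t + D * t ^ 2))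
        ((2 * D * A - B ^ 2) / A ^ 2) 0 := by
      have := hnum.fun_div (hquad 0) (hq0 0)
      exact this.congr_deriv (by ring)
    exact h1.sub (h2.const_mul 3)
  have : iteratedDeriv 2 F 0 = deriv (deriv F) 0 := by
    simp [iteratedDeriv_succ, iteratedDeriv_one]
  rw [this, hderiv_ev.deriv_eq, hd2.deriv]

lemma mfe_aux1 (C X Y A : ℝ) (hXY : X + Y = 4 * C) :
    -3 * (X / A ^ 2) + -3 * (Y / A ^ 2) = -12 * C / A ^ 2 := by
  have : -3 * (X / A ^ 2) + -3 * (Y / A ^ 2) = -3 * (X + Y) / A ^ 2 := by ring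
  rw [this, hXY]; ring

lemma mfe_aux2 (C X H L E : ℝ) (hX : 0 < X) (hH : 0 < H)
    (hL : L = -12 * C / X ^ 2) (hE : E = 2 * C * H / X ^ 3) :
    1 / (X / H) * L + 6 * E = 0 := by
  rw [hL, hE]
  field_simp
  ring

theorem local_mean_field_equation (a d : ℝ) (b : ℂ)
    (ha : 0 < a) (hdet : 0 < a * d - Complex.normSq b)
    (U : Set ℂ) (hU : IsOpen U) (h : ℂ → ℂ) (hh : DifferentiableOn ℂ h U)
    (hh0 : ∀ z ∈ U, h z ≠ 0) :
    let φ : ℂ → ℝ := fun z => a + 2 * ((starRingEnd ℂ) b * z).re + d * Complex.normSq z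
    let ρ : ℂ → ℝ := fun z => φ z / ‖h z‖
    let u : ℂ → ℝ := fun z =>
      Real.log (2 * (a * d - Complex.normSq b) * ‖h z‖ / (φ z) ^ 3)
    ∀ z ∈ U, (1 / ρ z) * laplacian u z + 6 * Real.exp (u z) = 0 := by
  intro φ ρ u z hz
  have hdet' : 0 < a * d - (b.re ^ 2 + b.im ^ 2) := by
    simpa [Complex.normSq_apply, sq] using hdet
  -- positivity of φ
  have key : ∀ x y : ℝ, 0 < a + 2 * (b.re * x + b.im * y) + d * (x ^ 2 + y ^ 2) := by
    intro x y
    rcases eq_or_lt_of_le (by positivity : (0 : ℝ) ≤ x ^ 2 + y ^ 2) with hxy | hxy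
    · have hx : x = 0 := by nlinarith [sq_nonneg x, sq_nonneg y]
      have hy : y = 0 := by nlinarith [sq_nonneg x, sq_nonneg y]
      simpa [hx, hy] using ha
    · nlinarith [sq_nonneg (a + b.re * x + b.im * y), sq_nonneg (b.re * y - b.im * x),
        mul_pos hdet' hxy]
  have hφval : ∀ w : ℂ, φ w = a + 2 * (b.re * w.re + b.im * w.im) + d * (w.re ^ 2 + w.im ^ 2) := by
    intro w
    simp only [φ, Complex.normSq_apply, Complex.mul_re, Complex.conj_re, Complex.conj_im, sq]
    ring
  have hφpos : ∀ w : ℂ, 0 < φ w := fun w => by rw [hφval w]; exact key w.re w.im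
  have hhz : h z ≠ 0 := hh0 z hz
  set W : Set ℂ := U ∩ (fun w => h w / h z) ⁻¹' Complex.slitPlane with hWdef
  have hWopen : IsOpen W :=
    (hh.continuousOn.div_const _).isOpen_inter_preimage hU Complex.isOpen_slitPlane
  have hzW : z ∈ W := ⟨hz, by simp [Set.mem_preimage, div_self hhz]⟩
  set g : ℂ → ℂ := fun w => Complex.log (h w / h z) with hgdef
  have hgdiff : DifferentiableOn ℂ g W := by
    intro w hw
    exact ((Complex.differentiableAt_log hw.2).comp w
      ((hh.differentiableAt (hU.mem_nhds hw.1)).div_const _)).differentiableWithinAt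
  set c : ℝ := Real.log (2 * (a * d - Complex.normSq b)) + Real.log (‖h z‖) with hcdef
  have habs : ∀ w ∈ U, 0 < ‖h w‖ := fun w hw =>
    norm_pos_iff.mpr (hh0 w hw)
  -- the local decomposition of u
  have hu : ∀ w ∈ W, u w = c + (g w).re - 3 * Real.log (φ w) := by
    intro w hw
    have h1 : (0 : ℝ) < 2 * (a * d - Complex.normSq b) := by linarith
    have h2 := habs w hw.1
    have h3 := hφpos w
    have h4 := habs z hz
    simp only [u, g, hcdef, Complex.log_re, norm_div]
    rw [Real.log_div (by positivity) (by positivity), Real.log_mul (by positivity) h2.ne',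
      Real.log_pow, Real.log_div h2.ne' h4.ne']
    push_cast
    ring
  -- direction 1
  set A : ℝ := φ z with hAdef
  have hApos : 0 < A := hφpos z
  set B₁ : ℝ := 2 * (b.re + d * z.re) with hB1
  set B₂ : ℝ := 2 * (b.im + d * z.im) with hB2
  have hquad1 : ∀ t : ℝ, φ (z + (t : ℂ)) = A + B₁ * t + d * t ^ 2 := by
    intro t
    rw [hφval, hAdef, hB1, hφval]
    simp only [Complex.add_re, Complex.add_im, Complex.ofReal_re, Complex.ofReal_im, hB1]
    ring
  have hquad2 : ∀ t : ℝ, φ (z + (t : ℂ) * Complex.I) = A + B₂ * t + d * t ^ 2 := by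
    intro t
    rw [hφval, hAdef, hB2, hφval]
    simp only [Complex.add_re, Complex.add_im, Complex.mul_re, Complex.mul_im,
      Complex.ofReal_re, Complex.ofReal_im, Complex.I_re, Complex.I_im, hB2]
    ring
  have hpos1 : ∀ t : ℝ, 0 < A + B₁ * t + d * t ^ 2 := fun t => hquad1 t ▸ hφpos _
  have hpos2 : ∀ t : ℝ, 0 < A + B₂ * t + d * t ^ 2 := fun t => hquad2 t ▸ hφpos _
  have hF1 : ∀ t : ℝ, z + (t : ℂ) * 1 ∈ W →
      u (z + (t : ℂ)) = c + (g (z + (t : ℂ) * 1)).re - 3 * Real.log (A + B₁ * t + d * t ^ 2) := by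
    intro t ht
    rw [mul_one] at ht ⊢
    rw [hu _ ht, hquad1 t]
  have hF2 : ∀ t : ℝ, z + (t : ℂ) * Complex.I ∈ W →
      u (z + (t : ℂ) * Complex.I) =
        c + (g (z + (t : ℂ) * Complex.I)).re - 3 * Real.log (A + B₂ * t + d * t ^ 2) := by
    intro t ht
    rw [hu _ ht, hquad2 t]
  have r1 := line_second_deriv W hWopen g hgdiff z hzW 1 A B₁ d c hpos1
    (fun t : ℝ => u (z + (t : ℂ))) hF1
  have r2 := line_second_deriv W hWopen g hgdiff z hzW Complex.I A B₂ d c hpos2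
    (fun t : ℝ => u (z + (t : ℂ) * Complex.I)) hF2
  have hlap : laplacian u z = -3 * ((2 * d * A - B₁ ^ 2) / A ^ 2)
      + -3 * ((2 * d * A - B₂ ^ 2) / A ^ 2) := by
    rw [laplacian, r1, r2]
    simp [Complex.I_sq]
    ring
  -- the determinant identity
  have hid : (2 * d * A - B₁ ^ 2) + (2 * d * A - B₂ ^ 2) = 4 * (a * d - Complex.normSq b) := by
    rw [hAdef, hφval, hB1, hB2]
    simp only [Complex.normSq_apply]
    ring
  have hexp : Real.exp (u z) = 2 * (a * d - Complex.normSq b) * ‖h z‖ / A ^ 3 := by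
    have h1 : (0 : ℝ) < 2 * (a * d - Complex.normSq b) := by linarith
    have h2 := habs z hz
    rw [show u z = Real.log (2 * (a * d - Complex.normSq b) * ‖h z‖ / A ^ 3) from rfl,
      Real.exp_log (by positivity)]
  have hρ : ρ z = A / ‖h z‖ := rfl
  have hlap' : laplacian u z = -12 * (a * d - Complex.normSq b) / A ^ 2 := by
    rw [hlap]
    exact mfe_aux1 _ _ _ _ hid
  have h2 := habs z hz
  rw [hρ]
  exact mfe_aux2 _ _ _ _ _ hApos h2 hlap' hexp
end
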